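/- For every p ∈ ℝ^N with p_n > 0 for all n and Σ_n p_n < 1, there exists a unique z ∈ ℝ^N such that p_n = ĝ_n(z_n) / (1 + Σ_{l=1}^N ĝ_l(z_l)) for every n = 1,…,N; this z is characterized by ĝ_n(z_n) = p_n / (1 − Σ_{l=1}^N p_l) for every n. -/

import Mathlib

open Real Set

lemma orthant_open (ι : Type*) [Fintype ι] : IsOpen {Y : ι → ℝ | ∀ i, 0 < Y i} := by
  have h : {Y : ι → ℝ | ∀ i, 0 < Y i} = ⋂ i, {Y : ι → ℝ | 0 < Y i} := by
    ext Y; simp [Set.mem_iInter]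
  rw [h]
  exact isOpen_iInter_of_finite fun i => isOpen_lt continuous_const (continuous_apply i)

lemma G_pos {ι : Type*} [Fintype ι] [Nonempty ι] [DecidableEq ι] (G : (ι → ℝ) → ℝ)
    (hsm : ContDiffOn ℝ 2 G {Y : ι → ℝ | ∀ i, 0 < Y i})
    (hhom : ∀ lam : ℝ, 0 < lam → ∀ Y : ι → ℝ, (∀ i, 0 < Y i) → G (lam • Y) = lam * G Y)
    (hd1 : ∀ Y : ι → ℝ, (∀ i, 0 < Y i) → ∀ i, 0 < fderiv ℝ G Y (Pi.single i 1))
    (Y : ι → ℝ) (hY : ∀ i, 0 < Y i) : 0 < G Y := by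
  have hopen := orthant_open ι
  have hdiff : DifferentiableAt ℝ G Y := by
    have h1 : DifferentiableOn ℝ G {Y : ι → ℝ | ∀ i, 0 < Y i} :=
      hsm.differentiableOn (by norm_num)
    exact (h1.differentiableAt (hopen.mem_nhds hY))
  have key : G Y = fderiv ℝ G Y Y := by
    have hφ : HasDerivAt (fun t : ℝ => (1 + t) • Y) Y 0 := by
      have : HasDerivAt (fun t : ℝ => (1 + t)) 1 0 := ((hasDerivAt_id (0:ℝ)).const_add 1)
      simpa using this.smul_const Y
    have h1 : HasDerivAt (fun t : ℝ => G ((1 + t) • Y)) (fderiv ℝ G Y Y) 0 := by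
      have h0 : HasFDerivAt G (fderiv ℝ G Y) ((fun t : ℝ => (1 + t) • Y) 0) := by
        simpa using hdiff.hasFDerivAt
      have := h0.comp_hasDerivAt 0 hφ
      exact this
    have h2 : HasDerivAt (fun t : ℝ => (1 + t) * G Y) (G Y) 0 := by
      simpa using ((hasDerivAt_id (0:ℝ)).const_add 1).mul_const (G Y)
    have heq : (fun t : ℝ => (1 + t) * G Y) =ᶠ[nhds (0:ℝ)] fun t => G ((1 + t) • Y) := by
      filter_upwards [eventually_gt_nhds (by norm_num : (-1:ℝ) < 0)] with t ht
      exact (hhom (1 + t) (by linarith) Y hY).symm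
    have h2' : HasDerivAt (fun t : ℝ => G ((1 + t) • Y)) (G Y) 0 :=
      h2.congr_of_eventuallyEq heq.symm
    exact h2'.unique h1
  have hYsum : Y = ∑ i, Y i • (Pi.single i (1:ℝ) : ι → ℝ) := by
    funext j
    simp [Finset.sum_apply, Pi.single_apply, mul_comm]
  rw [key]
  nth_rewrite 2 [hYsum]
  rw [map_sum]
  simp only [map_smul]
  apply Finset.sum_pos
  · intro i _
    exact mul_pos (hY i) (hd1 Y hY i)
  · exact Finset.univ_nonempty

set_option maxHeartbeats 1000000 in
lemma ghat_main {ι : Type*} [Fintype ι] [Nonempty ι] [DecidableEq ι]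
    (G : (ι → ℝ) → ℝ)
    (hsm : ContDiffOn ℝ 2 G {Y : ι → ℝ | ∀ i, 0 < Y i})
    (hhom : ∀ lam : ℝ, 0 < lam → ∀ Y : ι → ℝ, (∀ i, 0 < Y i) → G (lam • Y) = lam * G Y)
    (hd1 : ∀ Y : ι → ℝ, (∀ i, 0 < Y i) → ∀ i, 0 < fderiv ℝ G Y (Pi.single i 1))
    (A : Set ((ι → ℝ) × (ι → ℝ))) (hAne : A.Nonempty) (hAcomp : IsCompact A)
    (hAb : ∀ ab ∈ A, ∃ β : ℝ, 0 < β ∧ ∀ i, ab.2 i = β)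
    (c : ι → ℝ) :
    (∀ z : ℝ, 0 < sInf ((fun ab : (ι → ℝ) × (ι → ℝ) =>
        G fun i => Real.exp (ab.1 i - ab.2 i * (z + c i))) '' A)) ∧
    (∀ t : ℝ, 0 < t → ∃! z : ℝ, sInf ((fun ab : (ι → ℝ) × (ι → ℝ) =>
        G fun i => Real.exp (ab.1 i - ab.2 i * (z + c i))) '' A) = t) := by
  let F : ℝ → ((ι → ℝ) × (ι → ℝ)) → ℝ :=
    fun z ab => G fun i => Real.exp (ab.1 i - ab.2 i * (z + c i))
  let g : ℝ → ℝ := fun z => sInf (F z '' A)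
  suffices h : (∀ z, 0 < g z) ∧ (∀ t, 0 < t → ∃! z, g z = t) by exact h
  have hFpos : ∀ z ab, 0 < F z ab := fun z ab =>
    G_pos G hsm hhom hd1 _ (fun i => Real.exp_pos _)
  have hinner : Continuous (fun p : ℝ × ((ι → ℝ) × (ι → ℝ)) =>
      fun i : ι => Real.exp (p.2.1 i - p.2.2 i * (p.1 + c i))) := by
    apply continuous_pi; intro i; fun_prop
  have hFcont : Continuous (Function.uncurry F) :=
    (hsm.continuousOn).comp_continuous hinner (fun p i => Real.exp_pos _)
  have hFzcont : ∀ z, Continuous (F z) := by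
    intro z
    have h1 : Continuous fun ab : (ι → ℝ) × (ι → ℝ) => Function.uncurry F (z, ab) :=
      hFcont.comp (Continuous.prodMk_right z)
    exact h1
  let i0 : ι := Classical.arbitrary ι
  have hfact : ∀ ab ∈ A, ∀ z : ℝ, F z ab = Real.exp (-(ab.2 i0) * z) * F 0 ab := by
    intro ab hab z
    obtain ⟨β, hβ, hβeq⟩ := hAb ab hab
    have hv : (fun i => Real.exp (ab.1 i - ab.2 i * (z + c i)))
        = Real.exp (-β * z) • fun i => Real.exp (ab.1 i - ab.2 i * (0 + c i)) := by
      funext i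
      simp only [Pi.smul_apply, smul_eq_mul, hβeq i, ← Real.exp_add]
      congr 1; ring
    show G _ = _ * G _
    rw [hv, hhom _ (Real.exp_pos _) _ (fun i => Real.exp_pos _), hβeq i0]
  have hmin : ∀ z, ∃ ab ∈ A, g z = F z ab ∧ ∀ ab' ∈ A, F z ab ≤ F z ab' := fun z =>
    hAcomp.exists_sInf_image_eq_and_le hAne (hFzcont z).continuousOn
  have hgpos : ∀ z, 0 < g z := by
    intro z
    obtain ⟨ab, hab, heq, _⟩ := hmin z
    rw [heq]; exact hFpos z ab
  have hgle : ∀ z, ∀ ab ∈ A, g z ≤ F z ab := by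
    intro z ab hab
    exact csInf_le ((hAcomp.image_of_continuousOn (hFzcont z).continuousOn).bddBelow)
      (mem_image_of_mem _ hab)
  have hganti : StrictAnti g := by
    intro z1 z2 hlt
    obtain ⟨ab, hab, heq, _⟩ := hmin z1
    obtain ⟨β, hβ, hβeq⟩ := hAb ab hab
    have h2 : F z2 ab < F z1 ab := by
      rw [hfact ab hab z1, hfact ab hab z2, hβeq i0]
      exact mul_lt_mul_of_pos_right (Real.exp_lt_exp.2 (by nlinarith)) (hFpos 0 ab)
    calc g z2 ≤ F z2 ab := hgle z2 ab hab
      _ < F z1 ab := h2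
      _ = g z1 := heq.symm
  have hgcont : Continuous g := hAcomp.continuous_sInf hFcont
  obtain ⟨ab0, hab0⟩ := hAne
  have hβcont : Continuous (fun ab : (ι → ℝ) × (ι → ℝ) => ab.2 i0) :=
    (continuous_apply i0).comp continuous_snd
  obtain ⟨abβ, habβ, hβmin⟩ := hAcomp.exists_isMinOn ⟨ab0, hab0⟩ hβcont.continuousOn
  obtain ⟨abK, habK, hKmin⟩ := hAcomp.exists_isMinOn ⟨ab0, hab0⟩ (hFzcont 0).continuousOn
  set βm : ℝ := abβ.2 i0 with hβm
  set Km : ℝ := F 0 abK with hKm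
  have hβmpos : 0 < βm := by
    obtain ⟨β, hβ, hβeq⟩ := hAb abβ habβ
    rw [hβm, hβeq i0]; exact hβ
  have hKmpos : 0 < Km := hFpos 0 abK
  have hlow : ∀ z ≤ (0:ℝ), Real.exp (-βm * z) * Km ≤ g z := by
    intro z hz
    apply le_csInf ((Set.nonempty_of_mem hab0).image (F z))
    rintro x ⟨ab, hab, rfl⟩
    rw [hfact ab hab z]
    have h1 : βm ≤ ab.2 i0 := hβmin hab
    have h2 : Km ≤ F 0 ab := hKmin hab
    have h3 : Real.exp (-βm * z) ≤ Real.exp (-(ab.2 i0) * z) :=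
      Real.exp_le_exp.2 (by nlinarith)
    exact mul_le_mul h3 h2 hKmpos.le (Real.exp_pos _).le
  refine ⟨hgpos, ?_⟩
  intro t ht
  -- upper point
  obtain ⟨β0, hβ0, hβ0eq⟩ := hAb ab0 hab0
  set K0 : ℝ := F 0 ab0 with hK0d
  have hK0 : 0 < K0 := hFpos 0 ab0
  set z2 : ℝ := Real.log (K0 / t) / β0 with hz2d
  have hz2 : g z2 ≤ t := by
    have e0 : Real.exp (-(ab0.2 i0) * z2) * K0 = t := by
      rw [hβ0eq i0]
      have e1 : -β0 * z2 = -Real.log (K0 / t) := by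
        rw [hz2d]; field_simp
      rw [e1, Real.exp_neg, Real.exp_log (div_pos hK0 ht)]
      field_simp
    calc g z2 ≤ F z2 ab0 := hgle z2 ab0 hab0
      _ = Real.exp (-(ab0.2 i0) * z2) * K0 := hfact ab0 hab0 z2
      _ = t := e0
  set z1 : ℝ := min 0 (Real.log (Km / t) / βm) with hz1d
  have hz1 : t ≤ g z1 := by
    have h1 : z1 ≤ Real.log (Km / t) / βm := min_le_right _ _
    have e1 : βm * (Real.log (Km / t) / βm) = Real.log (Km / t) := by field_simp
    have h2 : Real.log (t / Km) ≤ -βm * z1 := by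
      have h3 : βm * z1 ≤ Real.log (Km / t) := by
        calc βm * z1 ≤ βm * (Real.log (Km / t) / βm) :=
              mul_le_mul_of_nonneg_left h1 hβmpos.le
          _ = Real.log (Km / t) := e1
      have h4 : Real.log (t / Km) = -Real.log (Km / t) := by
        rw [Real.log_div ht.ne' hKmpos.ne', Real.log_div hKmpos.ne' ht.ne']; ring
      linarith
    have h5 : t / Km ≤ Real.exp (-βm * z1) := by
      calc t / Km = Real.exp (Real.log (t / Km)) :=
            (Real.exp_log (div_pos ht hKmpos)).symm
        _ ≤ Real.exp (-βm * z1) := Real.exp_le_exp.2 h2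
    have h6 : t ≤ Real.exp (-βm * z1) * Km := by
      rw [div_le_iff₀ hKmpos] at h5; linarith
    exact h6.trans (hlow z1 (min_le_left _ _))
  have hga : t ≤ g (min z1 z2) := hz1.trans (hganti.antitone (min_le_left z1 z2))
  have hgb : g (max z1 z2) ≤ t := (hganti.antitone (le_max_right z1 z2)).trans hz2
  obtain ⟨z, _, hz⟩ := intermediate_value_Icc' (min_le_max (a := z1) (b := z2))
    hgcont.continuousOn ⟨hgb, hga⟩
  exact ⟨z, hz, fun y hy => hganti.injective (by rw [hy, hz])⟩

/-- `G^n(Y^n | z, a^n, b^n) = G^n((exp(a_i − b_i (z + c_i)))_{i ∈ V_n})` where the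
partition `V_n = {i | part i = n}`. -/
noncomputable def GzP (m N : ℕ) (part : Fin m → Fin N)
    (Gn : ∀ n : Fin N, ({i : Fin m // part i = n} → ℝ) → ℝ)
    (c : Fin m → ℝ) (n : Fin N) (z : ℝ)
    (ab : ({i : Fin m // part i = n} → ℝ) × ({i : Fin m // part i = n} → ℝ)) : ℝ :=
  Gn n fun i => Real.exp (ab.1 i - ab.2 i * (z + c i.1))

/-- `ĝ_n(z) = min_{(a^n, b^n) ∈ A^n} G^n(Y^n | z, a^n, b^n)`. -/
noncomputable def ghatP (m N : ℕ) (part : Fin m → Fin N)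
    (Gn : ∀ n : Fin N, ({i : Fin m // part i = n} → ℝ) → ℝ)
    (c : Fin m → ℝ)
    (An : ∀ n : Fin N,
      Set (({i : Fin m // part i = n} → ℝ) × ({i : Fin m // part i = n} → ℝ)))
    (n : Fin N) (z : ℝ) : ℝ :=
  sInf (GzP m N part Gn c n z '' An n)

/-- For every `p` with positive entries summing to less than one,
there is a unique `z ∈ ℝ^N` with `p_n = ĝ_n(z_n)/(1 + Σ_l ĝ_l(z_l))` for all `n`;
this `z` is characterized by `ĝ_n(z_n) = p_n/(1 − Σ_l p_l)` for all `n`. -/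
theorem stmt_5
    (m N : ℕ) (hN : 1 ≤ N)
    (part : Fin m → Fin N) (hpart : ∀ n : Fin N, ∃ i, part i = n)
    (Gn : ∀ n : Fin N, ({i : Fin m // part i = n} → ℝ) → ℝ)
    (hGnonneg : ∀ n, ∀ Y : {i : Fin m // part i = n} → ℝ,
      (∀ i, 0 < Y i) → 0 ≤ Gn n Y)
    (hGsmooth : ∀ n, ContDiffOn ℝ 2 (Gn n)
      {Y : {i : Fin m // part i = n} → ℝ | ∀ i, 0 < Y i})
    (hGhom : ∀ n, ∀ lam : ℝ, 0 < lam → ∀ Y : {i : Fin m // part i = n} → ℝ,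
      (∀ i, 0 < Y i) → Gn n (lam • Y) = lam * Gn n Y)
    (hGd1 : ∀ n, ∀ Y : {i : Fin m // part i = n} → ℝ, (∀ i, 0 < Y i) →
      ∀ i, 0 < fderiv ℝ (Gn n) Y (Pi.single i 1))
    (hGd2 : ∀ n, ∀ Y : {i : Fin m // part i = n} → ℝ, (∀ i, 0 < Y i) →
      ∀ i j, i ≠ j →
        fderiv ℝ (fun W => fderiv ℝ (Gn n) W (Pi.single i 1)) Y (Pi.single j 1) ≤ 0)
    (An : ∀ n : Fin N,
      Set (({i : Fin m // part i = n} → ℝ) × ({i : Fin m // part i = n} → ℝ)))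
    (hAne : ∀ n, (An n).Nonempty) (hAconv : ∀ n, Convex ℝ (An n))
    (hAcomp : ∀ n, IsCompact (An n))
    (hAb : ∀ n, ∀ ab ∈ An n, ∃ β : ℝ, 0 < β ∧ ∀ i, ab.2 i = β)
    (c : Fin m → ℝ) (hc : ∀ i, 0 ≤ c i) :
    ∀ p : Fin N → ℝ, (∀ n, 0 < p n) → (∑ n, p n) < 1 →
      (∃! z : Fin N → ℝ, ∀ n, p n =
        ghatP m N part Gn c An n (z n) /
          (1 + ∑ l, ghatP m N part Gn c An l (z l))) ∧
      (∀ z : Fin N → ℝ,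
        (∀ n, p n = ghatP m N part Gn c An n (z n) /
            (1 + ∑ l, ghatP m N part Gn c An l (z l))) ↔
        (∀ n, ghatP m N part Gn c An n (z n) = p n / (1 - ∑ l, p l))) := by
  have hmain : ∀ n : Fin N,
      (∀ z, 0 < ghatP m N part Gn c An n z) ∧
      (∀ t : ℝ, 0 < t → ∃! z : ℝ, ghatP m N part Gn c An n z = t) := by
    intro n
    haveI : Nonempty {i : Fin m // part i = n} :=
      ⟨⟨(hpart n).choose, (hpart n).choose_spec⟩⟩
    have h := ghat_main (Gn n) (hGsmooth n) (hGhom n) (hGd1 n)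
      (An n) (hAne n) (hAcomp n) (hAb n) (fun i => c i.1)
    exact h
  have hgpos : ∀ n z, 0 < ghatP m N part Gn c An n z := fun n z => (hmain n).1 z
  have hkey : ∀ (n : Fin N) (t : ℝ), 0 < t →
      ∃! z : ℝ, ghatP m N part Gn c An n z = t := fun n t ht => (hmain n).2 t ht
  intro p hp hps
  have hq0 : 0 < 1 - ∑ l, p l := sub_pos.mpr hps
  have equiv : ∀ z : Fin N → ℝ,
      (∀ n, p n = ghatP m N part Gn c An n (z n) /
          (1 + ∑ l, ghatP m N part Gn c An l (z l))) ↔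
      (∀ n, ghatP m N part Gn c An n (z n) = p n / (1 - ∑ l, p l)) := by
    intro z
    have hSpos : 0 ≤ ∑ l, ghatP m N part Gn c An l (z l) :=
      Finset.sum_nonneg fun l _ => (hgpos l (z l)).le
    have hS1 : (0:ℝ) < 1 + ∑ l, ghatP m N part Gn c An l (z l) := by linarith
    constructor
    · intro h
      have hsum : ∑ l, p l = (∑ l, ghatP m N part Gn c An l (z l)) /
          (1 + ∑ l, ghatP m N part Gn c An l (z l)) := by
        rw [Finset.sum_div]
        exact Finset.sum_congr rfl fun l _ => h l
      intro n
      rw [hsum, h n]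
      field_simp
      ring
    · intro h n
      have hSsum : ∑ l, ghatP m N part Gn c An l (z l)
          = (∑ l, p l) / (1 - ∑ l, p l) := by
        rw [Finset.sum_div]
        exact Finset.sum_congr rfl fun l _ => h l
      rw [h n, hSsum]
      field_simp
      ring
  refine ⟨?_, equiv⟩
  choose z hz using fun n => (hkey n (p n / (1 - ∑ l, p l)) (div_pos (hp n) hq0)).exists
  refine ⟨z, (equiv z).mpr hz, ?_⟩
  intro y hy
  funext n
  exact (hkey n _ (div_pos (hp n) hq0)).unique ((equiv y).mp hy n) (hz n)
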